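/- arXiv:2410.06281 — 2 statements merged into one kernel-verified Lean document; each statement's English description precedes it below -/
import Mathlib

section
/- Sequential Net Benefit statistics satisfy the independent increment property: with nested samples, letting ΔU_k = U_{wk} − U_{lk} be the Net Benefit at stage k (difference of the win and loss U-statistics over the first m_k treatment and n_k control subjects), for stages k < s one has Cov(ΔU_k, ΔU_s) = Var(ΔU_s), and hence the standardized statistics D_k = (ΔU_k − Δτ)/√Var(ΔU_k) satisfy Cov(D_k, D_s) = √(Var(ΔU_s)/Var(ΔU_k)). -/
open MeasureTheory ProbabilityTheory Finset

/-- Sequential Net Benefit statistics satisfy the independent increment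
property: with nested i.i.d. samples, `ΔU_k = U_{wk} − U_{lk}` satisfies
`Cov(ΔU_k, ΔU_s) = Var(ΔU_s)` for stages `k < s` (`m_k ≤ m_s`, `n_k ≤ n_s`), and the
standardized statistics `D_k = (ΔU_k − Δτ)/√Var(ΔU_k)` satisfy
`Cov(D_k, D_s) = √(Var(ΔU_s)/Var(ΔU_k))`. -/
theorem stmt_6 {Ω α β : Type*} [MeasurableSpace Ω] [MeasurableSpace α] [MeasurableSpace β]
    (μ : Measure Ω) [IsProbabilityMeasure μ]
    (X : ℕ → Ω → α) (Y : ℕ → Ω → β)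
    (hXmeas : ∀ i, Measurable (X i)) (hYmeas : ∀ j, Measurable (Y j))
    (hXid : ∀ i, IdentDistrib (X i) (X 0) μ μ)
    (hYid : ∀ j, IdentDistrib (Y j) (Y 0) μ μ)
    (hindep : iIndepFun
      (Sum.elim (fun i ω => Sum.inl (X i ω)) (fun j ω => Sum.inr (Y j ω)) : ℕ ⊕ ℕ → Ω → α ⊕ β) μ)
    (φw φl : α → β → ℝ)
    (hφw : Measurable (Function.uncurry φw)) (hφl : Measurable (Function.uncurry φl))
    (hL2w : MemLp (fun ω => φw (X 0 ω) (Y 0 ω)) 2 μ)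
    (hL2l : MemLp (fun ω => φl (X 0 ω) (Y 0 ω)) 2 μ)
    (τw τl : ℝ) (hτw : τw = ∫ ω, φw (X 0 ω) (Y 0 ω) ∂μ)
    (hτl : τl = ∫ ω, φl (X 0 ω) (Y 0 ω) ∂μ)
    (mk nk ms ns : ℕ) (hmk : 1 ≤ mk) (hnk : 1 ≤ nk) (hmks : mk ≤ ms) (hnks : nk ≤ ns)
    (ΔUk ΔUs : Ω → ℝ)
    (hΔUk : ΔUk = fun ω =>
      (1 / (mk * nk : ℝ)) * ∑ i ∈ range mk, ∑ j ∈ range nk, φw (X i ω) (Y j ω)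
      - (1 / (mk * nk : ℝ)) * ∑ i ∈ range mk, ∑ j ∈ range nk, φl (X i ω) (Y j ω))
    (hΔUs : ΔUs = fun ω =>
      (1 / (ms * ns : ℝ)) * ∑ i ∈ range ms, ∑ j ∈ range ns, φw (X i ω) (Y j ω)
      - (1 / (ms * ns : ℝ)) * ∑ i ∈ range ms, ∑ j ∈ range ns, φl (X i ω) (Y j ω))
    (hvk : 0 < variance ΔUk μ) (hvs : 0 < variance ΔUs μ)
    (cov : (Ω → ℝ) → (Ω → ℝ) → ℝ)
    (hcov : ∀ f g, cov f g = (∫ ω, f ω * g ω ∂μ) - (∫ ω, f ω ∂μ) * ∫ ω, g ω ∂μ)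
    (Dk Ds : Ω → ℝ)
    (hDk : Dk = fun ω => (ΔUk ω - (τw - τl)) / Real.sqrt (variance ΔUk μ))
    (hDs : Ds = fun ω => (ΔUs ω - (τw - τl)) / Real.sqrt (variance ΔUs μ)) :
    cov ΔUk ΔUs = variance ΔUs μ ∧
      cov Dk Ds = Real.sqrt (variance ΔUs μ / variance ΔUk μ) := by

  classical
  have hΩ : Nonempty Ω := by
    by_contra h
    rw [not_nonempty_iff] at h
    have h1 : (μ Set.univ) = 1 := measure_univ
    simp [Set.univ_eq_empty_iff.mpr h] at h1
  obtain ⟨ω0⟩ := hΩ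
  set Z : ℕ ⊕ ℕ → Ω → α ⊕ β :=
    Sum.elim (fun i ω => Sum.inl (X i ω)) (fun j ω => Sum.inr (Y j ω)) with hZdef
  have hZmeas : ∀ k, Measurable (Z k) := by
    rintro (i | j)
    · exact measurable_inl.comp (hXmeas i)
    · exact measurable_inr.comp (hYmeas j)
  set rA : α ⊕ β → α := Sum.elim id (fun _ => X 0 ω0) with hrA
  set rB : α ⊕ β → β := Sum.elim (fun _ => Y 0 ω0) id with hrB
  have hrAm : Measurable rA := Measurable.sumElim measurable_id measurable_const
  have hrBm : Measurable rB := Measurable.sumElim measurable_const measurable_id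
  have hXX : ∀ i a, i ≠ a → IndepFun (X i) (X a) μ := by
    intro i a h
    exact (hindep.indepFun (i := Sum.inl i) (j := Sum.inl a) (by simpa using h)).comp hrAm hrAm
  have hXY : ∀ i j, IndepFun (X i) (Y j) μ := by
    intro i j
    exact (hindep.indepFun (i := Sum.inl i) (j := Sum.inr j) (by simp)).comp hrAm hrBm
  have hYY : ∀ j b, j ≠ b → IndepFun (Y j) (Y b) μ := by
    intro j b h
    exact (hindep.indepFun (i := Sum.inr j) (j := Sum.inr b) (by simpa using h)).comp hrBm hrBm
  have hX_YY : ∀ i j b, IndepFun (X i) (fun ω => (Y j ω, Y b ω)) μ := by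
    intro i j b
    exact ((hindep.indepFun_prodMk hZmeas (Sum.inr j) (Sum.inr b) (Sum.inl i)
      (by simp) (by simp)).symm.comp hrAm (hrBm.prodMap hrBm))
  have hXX_Y : ∀ i a j, IndepFun (fun ω => (X i ω, X a ω)) (Y j) μ := by
    intro i a j
    exact (hindep.indepFun_prodMk hZmeas (Sum.inl i) (Sum.inl a) (Sum.inr j)
      (by simp) (by simp)).comp (hrAm.prodMap hrAm) hrBm
  have hXXYY : ∀ i a j b, IndepFun (fun ω => (X i ω, X a ω)) (fun ω => (Y j ω, Y b ω)) μ := by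
    intro i a j b
    exact (hindep.indepFun_prodMk_prodMk hZmeas (Sum.inl i) (Sum.inl a) (Sum.inr j) (Sum.inr b)
      (by simp) (by simp) (by simp) (by simp)).comp (hrAm.prodMap hrAm) (hrBm.prodMap hrBm)
  -- laws
  have lawXX : ∀ i a, i ≠ a → μ.map (fun ω => (X i ω, X a ω))
      = (μ.map (X 0)).prod (μ.map (X 0)) := by
    intro i a h
    rw [(indepFun_iff_map_prod_eq_prod_map_map (hXmeas i).aemeasurable
      (hXmeas a).aemeasurable).1 (hXX i a h), (hXid i).map_eq, (hXid a).map_eq]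
  have lawYY : ∀ j b, j ≠ b → μ.map (fun ω => (Y j ω, Y b ω))
      = (μ.map (Y 0)).prod (μ.map (Y 0)) := by
    intro j b h
    rw [(indepFun_iff_map_prod_eq_prod_map_map (hYmeas j).aemeasurable
      (hYmeas b).aemeasurable).1 (hYY j b h), (hYid j).map_eq, (hYid b).map_eq]
  have lawXY : ∀ i j, μ.map (fun ω => (X i ω, Y j ω))
      = (μ.map (X 0)).prod (μ.map (Y 0)) := by
    intro i j
    rw [(indepFun_iff_map_prod_eq_prod_map_map (hXmeas i).aemeasurable
      (hYmeas j).aemeasurable).1 (hXY i j), (hXid i).map_eq, (hYid j).map_eq]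
  have lawXYY : ∀ i j b, j ≠ b → μ.map (fun ω => (X i ω, (Y j ω, Y b ω)))
      = (μ.map (X 0)).prod ((μ.map (Y 0)).prod (μ.map (Y 0))) := by
    intro i j b h
    rw [(indepFun_iff_map_prod_eq_prod_map_map (hXmeas i).aemeasurable
      ((hYmeas j).prodMk (hYmeas b)).aemeasurable).1 (hX_YY i j b), (hXid i).map_eq, lawYY j b h]
  have lawXXY : ∀ i a j, i ≠ a → μ.map (fun ω => ((X i ω, X a ω), Y j ω))
      = ((μ.map (X 0)).prod (μ.map (X 0))).prod (μ.map (Y 0)) := by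
    intro i a j h
    rw [(indepFun_iff_map_prod_eq_prod_map_map ((hXmeas i).prodMk (hXmeas a)).aemeasurable
      (hYmeas j).aemeasurable).1 (hXX_Y i a j), (hYid j).map_eq, lawXX i a h]
  have lawQ : ∀ i a j b, i ≠ a → j ≠ b →
      μ.map (fun ω => ((X i ω, X a ω), (Y j ω, Y b ω)))
      = ((μ.map (X 0)).prod (μ.map (X 0))).prod ((μ.map (Y 0)).prod (μ.map (Y 0))) := by
    intro i a j b h1 h2
    rw [(indepFun_iff_map_prod_eq_prod_map_map ((hXmeas i).prodMk (hXmeas a)).aemeasurable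
      ((hYmeas j).prodMk (hYmeas b)).aemeasurable).1 (hXXYY i a j b), lawXX i a h1, lawYY j b h2]
  -- identically distributed quadruples
  have keyID : ∀ i j a b i' j' a' b', (i = a ↔ i' = a') → (j = b ↔ j' = b') →
      IdentDistrib (fun ω => ((X i ω, Y j ω), (X a ω, Y b ω)))
        (fun ω => ((X i' ω, Y j' ω), (X a' ω, Y b' ω))) μ μ := by
    intro i j a b i' j' a' b' hia hjb
    by_cases h1 : i = a
    · have h1' : i' = a' := hia.1 h1
      subst h1; subst h1'
      by_cases h2 : j = b
      · have h2' : j' = b' := hjb.1 h2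
        subst h2; subst h2'
        have base : IdentDistrib (fun ω => (X i ω, Y j ω)) (fun ω => (X i' ω, Y j' ω)) μ μ :=
          ⟨((hXmeas i).prodMk (hYmeas j)).aemeasurable,
           ((hXmeas i').prodMk (hYmeas j')).aemeasurable, by rw [lawXY, lawXY]⟩
        exact base.comp (u := fun q : α × β => (q, q)) (measurable_id.prodMk measurable_id)
      · have h2' : j' ≠ b' := fun h => h2 (hjb.2 h)
        have base : IdentDistrib (fun ω => (X i ω, (Y j ω, Y b ω)))
            (fun ω => (X i' ω, (Y j' ω, Y b' ω))) μ μ :=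
          ⟨((hXmeas i).prodMk ((hYmeas j).prodMk (hYmeas b))).aemeasurable,
           ((hXmeas i').prodMk ((hYmeas j').prodMk (hYmeas b'))).aemeasurable,
           by rw [lawXYY _ _ _ h2, lawXYY _ _ _ h2']⟩
        exact base.comp (u := fun q : α × (β × β) => ((q.1, q.2.1), (q.1, q.2.2))) (by fun_prop)
    · have h1' : i' ≠ a' := fun h => h1 (hia.2 h)
      by_cases h2 : j = b
      · have h2' : j' = b' := hjb.1 h2
        subst h2; subst h2'
        have base : IdentDistrib (fun ω => ((X i ω, X a ω), Y j ω))
            (fun ω => ((X i' ω, X a' ω), Y j' ω)) μ μ :=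
          ⟨(((hXmeas i).prodMk (hXmeas a)).prodMk (hYmeas j)).aemeasurable,
           (((hXmeas i').prodMk (hXmeas a')).prodMk (hYmeas j')).aemeasurable,
           by rw [lawXXY _ _ _ h1, lawXXY _ _ _ h1']⟩
        exact base.comp (u := fun q : (α × α) × β => ((q.1.1, q.2), (q.1.2, q.2))) (by fun_prop)
      · have h2' : j' ≠ b' := fun h => h2 (hjb.2 h)
        have base : IdentDistrib (fun ω => ((X i ω, X a ω), (Y j ω, Y b ω)))
            (fun ω => ((X i' ω, X a' ω), (Y j' ω, Y b' ω))) μ μ :=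
          ⟨(((hXmeas i).prodMk (hXmeas a)).prodMk ((hYmeas j).prodMk (hYmeas b))).aemeasurable,
           (((hXmeas i').prodMk (hXmeas a')).prodMk ((hYmeas j').prodMk (hYmeas b'))).aemeasurable,
           by rw [lawQ _ _ _ _ h1 h2, lawQ _ _ _ _ h1' h2']⟩
        exact base.comp
          (u := fun q : (α × α) × (β × β) => ((q.1.1, q.2.1), (q.1.2, q.2.2))) (by fun_prop)
  -- the net-benefit kernel
  set ψ : α → β → ℝ := fun x y => φw x y - φl x y with hψdef
  have hψm : Measurable (Function.uncurry ψ) := hφw.sub hφl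
  set T : ℕ → ℕ → Ω → ℝ := fun i j ω => ψ (X i ω) (Y j ω) with hTdef
  have hTmeas : ∀ i j, Measurable (T i j) := fun i j =>
    hψm.comp ((hXmeas i).prodMk (hYmeas j))
  have hTid : ∀ i j, IdentDistrib (T i j) (T 0 0) μ μ := by
    intro i j
    have base : IdentDistrib (fun ω => (X i ω, Y j ω)) (fun ω => (X 0 ω, Y 0 ω)) μ μ :=
      ⟨((hXmeas i).prodMk (hYmeas j)).aemeasurable,
       ((hXmeas 0).prodMk (hYmeas 0)).aemeasurable, by rw [lawXY, lawXY]⟩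
    exact base.comp hψm
  have hT2 : ∀ i j, MemLp (T i j) 2 μ := fun i j =>
    (hTid i j).symm.memLp_snd (hL2w.sub hL2l)
  have hTint : ∀ i j, Integrable (T i j) μ := fun i j => (hT2 i j).integrable one_le_two
  have hTmul : ∀ i j a b, Integrable (fun ω => T i j ω * T a b ω) μ := by
    intro i j a b
    have h := ((hT2 a b).smul (hT2 i j) (p := 2) (q := 2) (r := 1))
    exact memLp_one_iff_integrable.1 h
  have hTmean : ∀ i j, ∫ ω, T i j ω ∂μ = τw - τl := by
    intro i j
    rw [(hTid i j).integral_eq]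
    have h : ∫ ω, T 0 0 ω ∂μ
        = (∫ ω, φw (X 0 ω) (Y 0 ω) ∂μ) - ∫ ω, φl (X 0 ω) (Y 0 ω) ∂μ :=
      integral_sub (hL2w.integrable one_le_two) (hL2l.integrable one_le_two)
    rw [h, hτw, hτl]
  have keyInt : ∀ i j a b i' j' a' b', (i = a ↔ i' = a') → (j = b ↔ j' = b') →
      ∫ ω, T i j ω * T a b ω ∂μ = ∫ ω, T i' j' ω * T a' b' ω ∂μ := by
    intro i j a b i' j' a' b' hia hjb
    have H : Measurable (fun q : (α × β) × (α × β) => ψ q.1.1 q.1.2 * ψ q.2.1 q.2.2) :=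
      (hψm.comp measurable_fst).mul (hψm.comp measurable_snd)
    exact ((keyID i j a b i' j' a' b' hia hjb).comp H).integral_eq
  -- four pattern constants
  set A : ℝ := ∫ ω, T 0 0 ω * T 0 0 ω ∂μ with hAdef
  set B : ℝ := ∫ ω, T 0 0 ω * T 0 1 ω ∂μ with hBdef
  set C : ℝ := ∫ ω, T 0 0 ω * T 1 0 ω ∂μ with hCdef
  set D : ℝ := ∫ ω, T 0 0 ω * T 1 1 ω ∂μ with hDdef
  have hpat : ∀ i j a b, ∫ ω, T i j ω * T a b ω ∂μ =
      if i = a then (if j = b then A else B) else (if j = b then C else D) := by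
    intro i j a b
    by_cases h1 : i = a <;> by_cases h2 : j = b
    · rw [if_pos h1, if_pos h2]; exact keyInt i j a b 0 0 0 0 (by simp [h1]) (by simp [h2])
    · rw [if_pos h1, if_neg h2]; exact keyInt i j a b 0 0 0 1 (by simp [h1]) (by simp [h2])
    · rw [if_neg h1, if_pos h2]; exact keyInt i j a b 0 0 1 0 (by simp [h1]) (by simp [h2])
    · rw [if_neg h1, if_neg h2]; exact keyInt i j a b 0 0 1 1 (by simp [h1]) (by simp [h2])
  have hite : ∀ (N j : ℕ), j < N → ∀ Pv Qv : ℝ,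
      (∑ b ∈ range N, if j = b then Pv else Qv) = Pv + ((N : ℝ) - 1) * Qv := by
    intro N j hj Pv Qv
    have h1 : (∑ b ∈ range N, if j = b then Pv else Qv)
        = ∑ b ∈ range N, (Qv + if j = b then Pv - Qv else 0) := by
      refine Finset.sum_congr rfl fun b _ => ?_
      by_cases h : j = b <;> simp [h]
    rw [h1, Finset.sum_add_distrib, Finset.sum_const, card_range,
      Finset.sum_ite_eq, if_pos (mem_range.2 hj), nsmul_eq_mul]
    ring
  have hprod : ∀ m n M N : ℕ, m ≤ M → n ≤ N →
      ∫ ω, (∑ i ∈ range m, ∑ j ∈ range n, T i j ω) * (∑ a ∈ range M, ∑ b ∈ range N, T a b ω) ∂μ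
      = (m : ℝ) * n * ((A + ((N : ℝ) - 1) * B) + ((M : ℝ) - 1) * (C + ((N : ℝ) - 1) * D)) := by
    intro m n M N hmM hnN
    have e1 : ∀ ω, (∑ i ∈ range m, ∑ j ∈ range n, T i j ω)
          * (∑ a ∈ range M, ∑ b ∈ range N, T a b ω)
        = ∑ i ∈ range m, ∑ a ∈ range M, ∑ j ∈ range n, ∑ b ∈ range N, T i j ω * T a b ω := by
      intro ω
      rw [Finset.sum_mul_sum]
      refine Finset.sum_congr rfl fun i _ => ?_
      refine Finset.sum_congr rfl fun a _ => ?_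
      rw [Finset.sum_mul_sum]
    have e2 : ∫ ω, (∑ i ∈ range m, ∑ j ∈ range n, T i j ω)
          * (∑ a ∈ range M, ∑ b ∈ range N, T a b ω) ∂μ
        = ∑ i ∈ range m, ∑ a ∈ range M, ∑ j ∈ range n, ∑ b ∈ range N,
            ∫ ω, T i j ω * T a b ω ∂μ := by
      simp_rw [e1]
      rw [integral_finset_sum _ (fun i _ => integrable_finset_sum _ (fun a _ =>
        integrable_finset_sum _ (fun j _ => integrable_finset_sum _ (fun b _ => hTmul i j a b))))]
      refine Finset.sum_congr rfl fun i _ => ?_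
      rw [integral_finset_sum _ (fun a _ => integrable_finset_sum _ (fun j _ =>
        integrable_finset_sum _ (fun b _ => hTmul i j a b)))]
      refine Finset.sum_congr rfl fun a _ => ?_
      rw [integral_finset_sum _ (fun j _ => integrable_finset_sum _ (fun b _ => hTmul i j a b))]
      refine Finset.sum_congr rfl fun j _ => ?_
      rw [integral_finset_sum _ (fun b _ => hTmul i j a b)]
    rw [e2]
    have e3 : ∀ i a, (∑ j ∈ range n, ∑ b ∈ range N, ∫ ω, T i j ω * T a b ω ∂μ)
        = if i = a then (n : ℝ) * (A + ((N : ℝ) - 1) * B)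
          else (n : ℝ) * (C + ((N : ℝ) - 1) * D) := by
      intro i a
      by_cases h1 : i = a
      · rw [if_pos h1]
        have hin : ∀ j ∈ range n, (∑ b ∈ range N, ∫ ω, T i j ω * T a b ω ∂μ)
            = A + ((N : ℝ) - 1) * B := by
          intro j hj
          have hb : ∀ b ∈ range N, ∫ ω, T i j ω * T a b ω ∂μ = if j = b then A else B := by
            intro b _; rw [hpat, if_pos h1]
          rw [Finset.sum_congr rfl hb, hite N j (lt_of_lt_of_le (mem_range.1 hj) hnN)]
        rw [Finset.sum_congr rfl hin, Finset.sum_const, card_range, nsmul_eq_mul]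
      · rw [if_neg h1]
        have hin : ∀ j ∈ range n, (∑ b ∈ range N, ∫ ω, T i j ω * T a b ω ∂μ)
            = C + ((N : ℝ) - 1) * D := by
          intro j hj
          have hb : ∀ b ∈ range N, ∫ ω, T i j ω * T a b ω ∂μ = if j = b then C else D := by
            intro b _; rw [hpat, if_neg h1]
          rw [Finset.sum_congr rfl hb, hite N j (lt_of_lt_of_le (mem_range.1 hj) hnN)]
        rw [Finset.sum_congr rfl hin, Finset.sum_const, card_range, nsmul_eq_mul]
    have e4 : ∀ i ∈ range m, (∑ a ∈ range M, ∑ j ∈ range n, ∑ b ∈ range N,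
          ∫ ω, T i j ω * T a b ω ∂μ)
        = (n : ℝ) * (A + ((N : ℝ) - 1) * B)
          + ((M : ℝ) - 1) * ((n : ℝ) * (C + ((N : ℝ) - 1) * D)) := by
      intro i hi
      calc (∑ a ∈ range M, ∑ j ∈ range n, ∑ b ∈ range N, ∫ ω, T i j ω * T a b ω ∂μ)
          = ∑ a ∈ range M, if i = a then (n : ℝ) * (A + ((N : ℝ) - 1) * B)
              else (n : ℝ) * (C + ((N : ℝ) - 1) * D) :=
            Finset.sum_congr rfl fun a _ => e3 i a
        _ = _ := hite M i (lt_of_lt_of_le (mem_range.1 hi) hmM) _ _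
    rw [Finset.sum_congr rfl e4, Finset.sum_const, card_range, nsmul_eq_mul]
    ring

  -- rewrite the sequential statistics in terms of T
  have hUk : ΔUk = fun ω => (1 / (mk * nk : ℝ)) * ∑ i ∈ range mk, ∑ j ∈ range nk, T i j ω := by
    rw [hΔUk]; funext ω
    rw [← mul_sub, ← Finset.sum_sub_distrib]
    congr 1
    refine Finset.sum_congr rfl fun i _ => ?_
    rw [← Finset.sum_sub_distrib]
  have hUs : ΔUs = fun ω => (1 / (ms * ns : ℝ)) * ∑ i ∈ range ms, ∑ j ∈ range ns, T i j ω := by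
    rw [hΔUs]; funext ω
    rw [← mul_sub, ← Finset.sum_sub_distrib]
    congr 1
    refine Finset.sum_congr rfl fun i _ => ?_
    rw [← Finset.sum_sub_distrib]
  have hUk2 : MemLp ΔUk 2 μ := by
    rw [hUk]
    have hsum : MemLp (fun ω => ∑ i ∈ range mk, ∑ j ∈ range nk, T i j ω) 2 μ :=
      memLp_finsetSum _ (fun i _ => memLp_finsetSum _ (fun j _ => hT2 i j))
    exact hsum.const_mul _
  have hUs2 : MemLp ΔUs 2 μ := by
    rw [hUs]
    have hsum : MemLp (fun ω => ∑ i ∈ range ms, ∑ j ∈ range ns, T i j ω) 2 μ :=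
      memLp_finsetSum _ (fun i _ => memLp_finsetSum _ (fun j _ => hT2 i j))
    exact hsum.const_mul _
  have hmean : ∀ m n : ℕ, 1 ≤ m → 1 ≤ n →
      ∫ ω, (1 / (m * n : ℝ)) * ∑ i ∈ range m, ∑ j ∈ range n, T i j ω ∂μ = τw - τl := by
    intro m n hm hn
    rw [integral_const_mul]
    rw [integral_finset_sum _ (fun i _ => integrable_finset_sum _ (fun j _ => hTint i j))]
    have h1 : ∀ i ∈ range m, (∫ ω, ∑ j ∈ range n, T i j ω ∂μ) = (n : ℝ) * (τw - τl) := by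
      intro i _
      rw [integral_finset_sum _ (fun j _ => hTint i j),
        Finset.sum_congr rfl (fun j _ => hTmean i j), Finset.sum_const, card_range, nsmul_eq_mul]
    rw [Finset.sum_congr rfl h1, Finset.sum_const, card_range, nsmul_eq_mul]
    have hm0 : (m : ℝ) ≠ 0 := Nat.cast_ne_zero.2 (by omega)
    have hn0 : (n : ℝ) ≠ 0 := Nat.cast_ne_zero.2 (by omega)
    field_simp
  have hIk : ∫ ω, ΔUk ω ∂μ = τw - τl := by
    rw [hUk]; exact hmean mk nk hmk hnk
  have hIs : ∫ ω, ΔUs ω ∂μ = τw - τl := by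
    rw [hUs]; exact hmean ms ns (hmk.trans hmks) (hnk.trans hnks)
  have key : ∀ m n : ℕ, 1 ≤ m → 1 ≤ n → m ≤ ms → n ≤ ns →
      ∫ ω, ((1 / (m * n : ℝ)) * ∑ i ∈ range m, ∑ j ∈ range n, T i j ω)
          * ((1 / (ms * ns : ℝ)) * ∑ a ∈ range ms, ∑ b ∈ range ns, T a b ω) ∂μ
      = (1 / (ms * ns : ℝ))
          * ((A + ((ns : ℝ) - 1) * B) + ((ms : ℝ) - 1) * (C + ((ns : ℝ) - 1) * D)) := by
    intro m n hm hn hmM hnN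
    have e : (fun ω => ((1 / (m * n : ℝ)) * ∑ i ∈ range m, ∑ j ∈ range n, T i j ω)
          * ((1 / (ms * ns : ℝ)) * ∑ a ∈ range ms, ∑ b ∈ range ns, T a b ω))
        = fun ω => ((1 / (m * n : ℝ)) * (1 / (ms * ns : ℝ)))
          * ((∑ i ∈ range m, ∑ j ∈ range n, T i j ω)
            * (∑ a ∈ range ms, ∑ b ∈ range ns, T a b ω)) := by
      funext ω; ring
    rw [e, integral_const_mul, hprod m n ms ns hmM hnN]
    have h1 : (m : ℝ) ≠ 0 := Nat.cast_ne_zero.2 (by omega)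
    have h2 : (n : ℝ) ≠ 0 := Nat.cast_ne_zero.2 (by omega)
    have h3 : (ms : ℝ) ≠ 0 := Nat.cast_ne_zero.2 (by omega)
    have h4 : (ns : ℝ) ≠ 0 := Nat.cast_ne_zero.2 (by omega)
    field_simp
  have hks : ∫ ω, ΔUk ω * ΔUs ω ∂μ
      = (1 / (ms * ns : ℝ))
          * ((A + ((ns : ℝ) - 1) * B) + ((ms : ℝ) - 1) * (C + ((ns : ℝ) - 1) * D)) := by
    rw [hUk, hUs]; exact key mk nk hmk hnk hmks hnks
  have hss : ∫ ω, ΔUs ω * ΔUs ω ∂μ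
      = (1 / (ms * ns : ℝ))
          * ((A + ((ns : ℝ) - 1) * B) + ((ms : ℝ) - 1) * (C + ((ns : ℝ) - 1) * D)) := by
    rw [hUs]; exact key ms ns (hmk.trans hmks) (hnk.trans hnks) le_rfl le_rfl
  have hvar : variance ΔUs μ
      = (∫ ω, ΔUs ω * ΔUs ω ∂μ) - (τw - τl) * (τw - τl) := by
    rw [variance_eq_sub hUs2, hIs]
    have h2 : ∫ ω, (ΔUs ^ 2) ω ∂μ = ∫ ω, ΔUs ω * ΔUs ω ∂μ := by
      apply integral_congr_ae
      filter_upwards with ω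
      simp [pow_two]
    rw [h2]
    ring
  have part1 : cov ΔUk ΔUs = variance ΔUs μ := by
    rw [hcov, hks, hIk, hIs, hvar, hss]
  refine ⟨part1, ?_⟩
  -- standardized statistics
  set σk : ℝ := Real.sqrt (variance ΔUk μ) with hσk
  set σs : ℝ := Real.sqrt (variance ΔUs μ) with hσs
  have hσk0 : σk ≠ 0 := ne_of_gt (Real.sqrt_pos.2 hvk)
  have hσs0 : σs ≠ 0 := ne_of_gt (Real.sqrt_pos.2 hvs)
  have hUkint : Integrable ΔUk μ := hUk2.integrable one_le_two
  have hUsint : Integrable ΔUs μ := hUs2.integrable one_le_two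
  have hUUint : Integrable (fun ω => ΔUk ω * ΔUs ω) μ := by
    have h := hUs2.smul hUk2 (p := 2) (q := 2) (r := 1)
    exact memLp_one_iff_integrable.1 h
  have hDkmean : ∫ ω, Dk ω ∂μ = 0 := by
    rw [hDk]
    have e : (fun ω => (ΔUk ω - (τw - τl)) / σk)
        = fun ω => (1 / σk) * (ΔUk ω - (τw - τl)) := by
      funext ω; ring
    rw [e, integral_const_mul, integral_sub hUkint (integrable_const _), hIk, integral_const]
    simp
  have hfg : ∫ ω, ΔUk ω * ΔUs ω ∂μ = variance ΔUs μ + (τw - τl) * (τw - τl) := by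
    rw [hks, hvar, hss]
    ring
  have hDprod : ∫ ω, Dk ω * Ds ω ∂μ = variance ΔUs μ / (σk * σs) := by
    simp only [hDk, hDs]
    have e : (fun ω => ((ΔUk ω - (τw - τl)) / σk) * ((ΔUs ω - (τw - τl)) / σs))
        = fun ω => (1 / (σk * σs)) * (ΔUk ω * ΔUs ω - (τw - τl) * ΔUs ω
            - (τw - τl) * ΔUk ω + (τw - τl) * (τw - τl)) := by
      funext ω
      field_simp
      ring
    have s1 : ∫ ω, (ΔUk ω * ΔUs ω - (τw - τl) * ΔUs ω) ∂μ
        = (∫ ω, ΔUk ω * ΔUs ω ∂μ) - ∫ ω, (τw - τl) * ΔUs ω ∂μ :=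
      integral_sub hUUint (hUsint.const_mul _)
    have s2 : ∫ ω, (ΔUk ω * ΔUs ω - (τw - τl) * ΔUs ω - (τw - τl) * ΔUk ω) ∂μ
        = (∫ ω, (ΔUk ω * ΔUs ω - (τw - τl) * ΔUs ω) ∂μ) - ∫ ω, (τw - τl) * ΔUk ω ∂μ :=
      integral_sub (hUUint.sub (hUsint.const_mul _)) (hUkint.const_mul _)
    have s3 : ∫ ω, (ΔUk ω * ΔUs ω - (τw - τl) * ΔUs ω - (τw - τl) * ΔUk ω
          + (τw - τl) * (τw - τl)) ∂μ
        = (∫ ω, (ΔUk ω * ΔUs ω - (τw - τl) * ΔUs ω - (τw - τl) * ΔUk ω) ∂μ)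
          + ∫ ω, (τw - τl) * (τw - τl) ∂μ :=
      integral_add ((hUUint.sub (hUsint.const_mul _)).sub (hUkint.const_mul _))
        (integrable_const _)
    rw [e, integral_const_mul, s3, s2, s1, integral_const_mul, integral_const_mul,
      integral_const, hIk, hIs, hfg]
    simp only [probReal_univ, one_smul]
    field_simp
    ring
  have hv2 : variance ΔUs μ = σs * σs := by
    rw [hσs]; exact (Real.mul_self_sqrt hvs.le).symm
  rw [hcov, hDprod, hDkmean, Real.sqrt_div hvs.le, ← hσs, ← hσk, hv2]
  rw [zero_mul, sub_zero]
  rw [mul_comm σk σs, mul_div_mul_left _ _ hσs0]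
end

section
/- Cross-kernel covariance of nested sequential U-statistics: for two possibly different square-integrable kernels φ_u, φ_v and nested samples with m_k ≤ m_s and n_k ≤ n_s, Cov(U_{uk}, U_{vs}) = ((n_s−1)/(m_s n_s)) ξ^{uv}_{10} + ((m_s−1)/(m_s n_s)) ξ^{uv}_{01} + (1/(m_s n_s)) ξ^{uv}_{11}, i.e., the covariance depends only on the later-stage sample sizes (m_s, n_s). -/
open MeasureTheory ProbabilityTheory Finset

private lemma sum_ite_helper {n j : ℕ} (hj : j < n) (x y : ℝ) :
    ∑ j' ∈ range n, (if j = j' then x else y) = x + ((n : ℝ) - 1) * y := by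
  have h : ∀ j', (if j = j' then x else y) = y + (if j = j' then x - y else 0) := by
    intro j'; split <;> ring
  simp_rw [h]
  rw [Finset.sum_add_distrib, Finset.sum_const, Finset.sum_ite_eq, if_pos (mem_range.mpr hj),
    card_range, nsmul_eq_mul]
  ring

/-- Cross-kernel covariance of nested sequential two-sample U-statistics:
for square-integrable kernels `φ_u, φ_v` and nested samples with `m_k ≤ m_s`,
`n_k ≤ n_s`, `Cov(U_{uk}, U_{vs}) = ((n_s−1)/(m_s n_s)) ξ^{uv}₁₀
+ ((m_s−1)/(m_s n_s)) ξ^{uv}₀₁ + (1/(m_s n_s)) ξ^{uv}₁₁`. -/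
theorem stmt_7 {Ω α β : Type*} [MeasurableSpace Ω] [MeasurableSpace α] [MeasurableSpace β]
    (μ : Measure Ω) [IsProbabilityMeasure μ]
    (X : ℕ → Ω → α) (Y : ℕ → Ω → β)
    (hXmeas : ∀ i, Measurable (X i)) (hYmeas : ∀ j, Measurable (Y j))
    (hXid : ∀ i, IdentDistrib (X i) (X 0) μ μ)
    (hYid : ∀ j, IdentDistrib (Y j) (Y 0) μ μ)
    (hindep : iIndepFun (m := fun _ : ℕ ⊕ ℕ => (inferInstance : MeasurableSpace (α ⊕ β)))
      (Sum.elim (fun i ω => Sum.inl (X i ω)) (fun j ω => Sum.inr (Y j ω))) μ)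
    (φu φv : α → β → ℝ)
    (hφu : Measurable (Function.uncurry φu)) (hφv : Measurable (Function.uncurry φv))
    (hL2u : MemLp (fun ω => φu (X 0 ω) (Y 0 ω)) 2 μ)
    (hL2v : MemLp (fun ω => φv (X 0 ω) (Y 0 ω)) 2 μ)
    (mk nk ms ns : ℕ) (hmk : 1 ≤ mk) (hnk : 1 ≤ nk)
    (hms : 2 ≤ ms) (hns : 2 ≤ ns) (hmks : mk ≤ ms) (hnks : nk ≤ ns)
    (Uuk Uvs : Ω → ℝ)
    (hUuk : Uuk = fun ω =>
      (1 / (mk * nk : ℝ)) * ∑ i ∈ range mk, ∑ j ∈ range nk, φu (X i ω) (Y j ω))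
    (hUvs : Uvs = fun ω =>
      (1 / (ms * ns : ℝ)) * ∑ i ∈ range ms, ∑ j ∈ range ns, φv (X i ω) (Y j ω))
    (cov : (Ω → ℝ) → (Ω → ℝ) → ℝ)
    (hcov : ∀ f g, cov f g = (∫ ω, f ω * g ω ∂μ) - (∫ ω, f ω ∂μ) * ∫ ω, g ω ∂μ)
    (ξ10 ξ01 ξ11 : ℝ)
    (hξ10 : ξ10 = cov (fun ω => φu (X 0 ω) (Y 0 ω)) (fun ω => φv (X 0 ω) (Y 1 ω)))
    (hξ01 : ξ01 = cov (fun ω => φu (X 0 ω) (Y 0 ω)) (fun ω => φv (X 1 ω) (Y 0 ω)))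
    (hξ11 : ξ11 = cov (fun ω => φu (X 0 ω) (Y 0 ω)) (fun ω => φv (X 0 ω) (Y 0 ω))) :
    cov Uuk Uvs = ((ns - 1 : ℝ) / (ms * ns)) * ξ10 + ((ms - 1 : ℝ) / (ms * ns)) * ξ01
      + (1 / (ms * ns : ℝ)) * ξ11 := by
  classical
  -- notation for the index family
  set Z : ℕ ⊕ ℕ → Ω → α ⊕ β :=
    Sum.elim (fun i ω => Sum.inl (X i ω)) (fun j ω => Sum.inr (Y j ω)) with hZ
  have hZmeas : ∀ k, Measurable (Z k) := by
    rintro (i | j)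
    · exact measurable_inl.comp (hXmeas i)
    · exact measurable_inr.comp (hYmeas j)
  -- nonemptiness
  have hΩ : Nonempty Ω := by
    by_contra h
    rw [not_nonempty_iff] at h
    have h1 : μ Set.univ = 1 := measure_univ
    rw [Set.univ_eq_empty_iff.mpr h, measure_empty] at h1
    exact zero_ne_one h1
  obtain ⟨ω0⟩ := hΩ
  have hα : Nonempty α := ⟨X 0 ω0⟩
  have hβ : Nonempty β := ⟨Y 0 ω0⟩
  -- retractions
  set gX : α ⊕ β → α := Sum.elim id (fun _ => Classical.arbitrary α) with hgXdef
  set gY : α ⊕ β → β := Sum.elim (fun _ => Classical.arbitrary β) id with hgYdef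
  have hgX : Measurable gX := measurable_id.sumElim measurable_const
  have hgY : Measurable gY := measurable_const.sumElim measurable_id
  -- basic independence facts
  have hXY : ∀ i j, IndepFun (X i) (Y j) μ := by
    intro i j
    exact (hindep.indepFun (show (Sum.inl i : ℕ ⊕ ℕ) ≠ Sum.inr j by simp)).comp hgX hgY
  have hYY : ∀ j j', j ≠ j' → IndepFun (Y j) (Y j') μ := by
    intro j j' h
    exact (hindep.indepFun (show (Sum.inr j : ℕ ⊕ ℕ) ≠ Sum.inr j' by simpa using h)).comp hgY hgY
  have hXX : ∀ i i', i ≠ i' → IndepFun (X i) (X i') μ := by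
    intro i i' h
    exact (hindep.indepFun (show (Sum.inl i : ℕ ⊕ ℕ) ≠ Sum.inl i' by simpa using h)).comp hgX hgX
  -- pair laws
  have hpairmap : ∀ i j, μ.map (fun ω => (X i ω, Y j ω)) =
      (μ.map (X 0)).prod (μ.map (Y 0)) := by
    intro i j
    rw [← (hXid i).map_eq, ← (hYid j).map_eq]
    exact (indepFun_iff_map_prod_eq_prod_map_map (hXmeas i).aemeasurable
      (hYmeas j).aemeasurable).mp (hXY i j)
  have hpairId : ∀ i j, IdentDistrib (fun ω => (X i ω, Y j ω)) (fun ω => (X 0 ω, Y 0 ω)) μ μ := by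
    intro i j
    exact ⟨((hXmeas i).prodMk (hYmeas j)).aemeasurable,
      ((hXmeas 0).prodMk (hYmeas 0)).aemeasurable, by rw [hpairmap i j, hpairmap 0 0]⟩
  -- triple laws : (X i, Y j, Y j') with j ≠ j'
  have htripY : ∀ i j j', j ≠ j' →
      μ.map (fun ω => (X i ω, Y j ω, Y j' ω)) =
        (μ.map (X 0)).prod ((μ.map (Y 0)).prod (μ.map (Y 0))) := by
    intro i j j' h
    have hI : IndepFun (X i) (fun ω => (Y j ω, Y j' ω)) μ := by
      exact ((hindep.indepFun_prodMk hZmeas (Sum.inr j) (Sum.inr j') (Sum.inl i)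
        (by simp) (by simp)).symm).comp hgX (hgY.prodMap hgY)
    have h1 : μ.map (fun ω => (X i ω, Y j ω, Y j' ω)) =
        (μ.map (X i)).prod (μ.map (fun ω => (Y j ω, Y j' ω))) :=
      (indepFun_iff_map_prod_eq_prod_map_map (hXmeas i).aemeasurable
        (((hYmeas j).prodMk (hYmeas j')).aemeasurable)).mp hI
    have h2 : μ.map (fun ω => (Y j ω, Y j' ω)) = (μ.map (Y j)).prod (μ.map (Y j')) :=
      (indepFun_iff_map_prod_eq_prod_map_map (hYmeas j).aemeasurable
        (hYmeas j').aemeasurable).mp (hYY j j' h)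
    rw [h1, h2, (hXid i).map_eq, (hYid j).map_eq, (hYid j').map_eq]
  have htripYId : ∀ i j j', j ≠ j' →
      IdentDistrib (fun ω => (X i ω, Y j ω, Y j' ω)) (fun ω => (X 0 ω, Y 0 ω, Y 1 ω)) μ μ := by
    intro i j j' h
    exact ⟨((hXmeas i).prodMk ((hYmeas j).prodMk (hYmeas j'))).aemeasurable,
      ((hXmeas 0).prodMk ((hYmeas 0).prodMk (hYmeas 1))).aemeasurable,
      by rw [htripY i j j' h, htripY 0 0 1 (by norm_num)]⟩
  -- triple laws : (X i, X i', Y j) with i ≠ i'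
  have htripX : ∀ i i' j, i ≠ i' →
      μ.map (fun ω => (X i ω, X i' ω, Y j ω)) =
        (μ.map (X 0)).prod ((μ.map (X 0)).prod (μ.map (Y 0))) := by
    intro i i' j h
    have hI : IndepFun (X i) (fun ω => (X i' ω, Y j ω)) μ := by
      exact ((hindep.indepFun_prodMk hZmeas (Sum.inl i') (Sum.inr j) (Sum.inl i)
        (by simpa using Ne.symm h) (by simp)).symm).comp hgX (hgX.prodMap hgY)
    have h1 : μ.map (fun ω => (X i ω, X i' ω, Y j ω)) =
        (μ.map (X i)).prod (μ.map (fun ω => (X i' ω, Y j ω))) :=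
      (indepFun_iff_map_prod_eq_prod_map_map (hXmeas i).aemeasurable
        (((hXmeas i').prodMk (hYmeas j)).aemeasurable)).mp hI
    rw [h1, hpairmap i' j, (hXid i).map_eq]
  have htripXId : ∀ i i' j, i ≠ i' →
      IdentDistrib (fun ω => (X i ω, X i' ω, Y j ω)) (fun ω => (X 0 ω, X 1 ω, Y 0 ω)) μ μ := by
    intro i i' j h
    exact ⟨((hXmeas i).prodMk ((hXmeas i').prodMk (hYmeas j))).aemeasurable,
      ((hXmeas 0).prodMk ((hXmeas 1).prodMk (hYmeas 0))).aemeasurable,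
      by rw [htripX i i' j h, htripX 0 1 0 (by norm_num)]⟩
  -- independence of disjoint pairs
  have hquad : ∀ i j i' j', i ≠ i' → j ≠ j' →
      IndepFun (fun ω => (X i ω, Y j ω)) (fun ω => (X i' ω, Y j' ω)) μ := by
    intro i j i' j' hi hj
    exact (hindep.indepFun_prodMk_prodMk hZmeas (Sum.inl i) (Sum.inr j) (Sum.inl i') (Sum.inr j')
      (by simpa using hi) (by simp) (by simp) (by simpa using hj)).comp
      (hgX.prodMap hgY) (hgX.prodMap hgY)
  -- the five constants
  set E := ∫ ω, φu (X 0 ω) (Y 0 ω) ∂μ with hE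
  set F := ∫ ω, φv (X 0 ω) (Y 0 ω) ∂μ with hF
  set A := ∫ ω, φu (X 0 ω) (Y 0 ω) * φv (X 0 ω) (Y 1 ω) ∂μ with hA
  set B := ∫ ω, φu (X 0 ω) (Y 0 ω) * φv (X 1 ω) (Y 0 ω) ∂μ with hB
  set C := ∫ ω, φu (X 0 ω) (Y 0 ω) * φv (X 0 ω) (Y 0 ω) ∂μ with hC
  -- expectations are constant
  have hEu : ∀ i j, ∫ ω, φu (X i ω) (Y j ω) ∂μ = E := fun i j =>
    ((hpairId i j).comp hφu).integral_eq
  have hFv : ∀ i j, ∫ ω, φv (X i ω) (Y j ω) ∂μ = F := fun i j =>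
    ((hpairId i j).comp hφv).integral_eq
  -- L² and integrability
  have hL2u' : ∀ i j, MemLp (fun ω => φu (X i ω) (Y j ω)) 2 μ := fun i j =>
    ((hpairId i j).comp hφu).memLp_iff.mpr hL2u
  have hL2v' : ∀ i j, MemLp (fun ω => φv (X i ω) (Y j ω)) 2 μ := fun i j =>
    ((hpairId i j).comp hφv).memLp_iff.mpr hL2v
  have hintu : ∀ i j, Integrable (fun ω => φu (X i ω) (Y j ω)) μ := fun i j =>
    (hL2u' i j).integrable one_le_two
  have hintv : ∀ i j, Integrable (fun ω => φv (X i ω) (Y j ω)) μ := fun i j =>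
    (hL2v' i j).integrable one_le_two
  have hintuv : ∀ i j i' j',
      Integrable (fun ω => φu (X i ω) (Y j ω) * φv (X i' ω) (Y j' ω)) μ := by
    intro i j i' j'
    have h : MemLp _ 1 μ := (hL2v' i' j').smul (hL2u' i j)
    exact memLp_one_iff_integrable.mp h
  -- value of each mixed second moment
  have hKval : ∀ i i' j j', ∫ ω, φu (X i ω) (Y j ω) * φv (X i' ω) (Y j' ω) ∂μ =
      if i = i' then (if j = j' then C else A) else (if j = j' then B else E * F) := by
    intro i i' j j'
    by_cases hi : i = i'
    · subst hi
      by_cases hj : j = j'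
      · subst hj
        simp only [if_pos rfl]
        exact ((hpairId i j).comp
          ((hφu.mul hφv) : Measurable fun p : α × β => φu p.1 p.2 * φv p.1 p.2)).integral_eq
      · simp only [if_pos rfl, if_neg hj]
        have hG : Measurable fun p : α × β × β => φu p.1 p.2.1 * φv p.1 p.2.2 :=
          (hφu.comp (measurable_fst.prodMk (measurable_fst.comp measurable_snd))).mul
            (hφv.comp (measurable_fst.prodMk (measurable_snd.comp measurable_snd)))
        exact ((htripYId i j j' hj).comp hG).integral_eq
    · by_cases hj : j = j'
      · subst hj
        simp only [if_neg hi, if_pos rfl]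
        have hG : Measurable fun p : α × α × β => φu p.1 p.2.2 * φv p.2.1 p.2.2 :=
          (hφu.comp (measurable_fst.prodMk (measurable_snd.comp measurable_snd))).mul
            (hφv.comp ((measurable_fst.comp measurable_snd).prodMk
              (measurable_snd.comp measurable_snd)))
        exact ((htripXId i i' j hi).comp hG).integral_eq
      · simp only [if_neg hi, if_neg hj]
        have hI := (hquad i j i' j' hi hj).comp hφu hφv
        have h2 : ∫ ω, φu (X i ω) (Y j ω) * φv (X i' ω) (Y j' ω) ∂μ =
            (∫ ω, φu (X i ω) (Y j ω) ∂μ) * ∫ ω, φv (X i' ω) (Y j' ω) ∂μ := hI.integral_fun_mul_eq_mul_integral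
          (hφu.comp ((hXmeas i).prodMk (hYmeas j))).aestronglyMeasurable
          (hφv.comp ((hXmeas i').prodMk (hYmeas j'))).aestronglyMeasurable
        rw [h2, hEu i j, hFv i' j']
  -- expectations of the U-statistics
  have hmk0 : (mk : ℝ) ≠ 0 := Nat.cast_ne_zero.mpr (by omega)
  have hnk0 : (nk : ℝ) ≠ 0 := Nat.cast_ne_zero.mpr (by omega)
  have hms0 : (ms : ℝ) ≠ 0 := Nat.cast_ne_zero.mpr (by omega)
  have hns0 : (ns : ℝ) ≠ 0 := Nat.cast_ne_zero.mpr (by omega)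
  have hintUu : ∫ ω, Uuk ω ∂μ = E := by
    rw [hUuk]
    rw [integral_const_mul]
    rw [integral_finset_sum _ (fun i _ => integrable_finset_sum _ fun j _ => hintu i j)]
    have : ∀ i ∈ range mk, ∫ ω, ∑ j ∈ range nk, φu (X i ω) (Y j ω) ∂μ = (nk : ℝ) * E := by
      intro i _
      rw [integral_finset_sum _ (fun j _ => hintu i j)]
      simp [hEu, mul_comm]
    rw [Finset.sum_congr rfl this, Finset.sum_const, card_range, nsmul_eq_mul]
    field_simp
  have hintUv : ∫ ω, Uvs ω ∂μ = F := by
    rw [hUvs]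
    rw [integral_const_mul]
    rw [integral_finset_sum _ (fun i _ => integrable_finset_sum _ fun j _ => hintv i j)]
    have : ∀ i ∈ range ms, ∫ ω, ∑ j ∈ range ns, φv (X i ω) (Y j ω) ∂μ = (ns : ℝ) * F := by
      intro i _
      rw [integral_finset_sum _ (fun j _ => hintv i j)]
      simp [hFv, mul_comm]
    rw [Finset.sum_congr rfl this, Finset.sum_const, card_range, nsmul_eq_mul]
    field_simp
  -- the product integral
  have hprod : ∫ ω, Uuk ω * Uvs ω ∂μ =
      (1 / (mk * nk : ℝ)) * (1 / (ms * ns : ℝ)) * ((mk : ℝ) * ((nk : ℝ) *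
        ((C + ((ns : ℝ) - 1) * A) + ((ms : ℝ) - 1) * (B + ((ns : ℝ) - 1) * (E * F))))) := by
    rw [hUuk, hUvs]
    have hfun : (fun ω => ((1 / (mk * nk : ℝ)) * ∑ i ∈ range mk, ∑ j ∈ range nk,
          φu (X i ω) (Y j ω)) * ((1 / (ms * ns : ℝ)) * ∑ i ∈ range ms, ∑ j ∈ range ns,
          φv (X i ω) (Y j ω))) =
        fun ω => (1 / (mk * nk : ℝ)) * (1 / (ms * ns : ℝ)) *
          ∑ i ∈ range mk, ∑ i' ∈ range ms, ∑ j ∈ range nk, ∑ j' ∈ range ns,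
            φu (X i ω) (Y j ω) * φv (X i' ω) (Y j' ω) := by
      funext ω
      have expand : (∑ i ∈ range mk, ∑ j ∈ range nk, φu (X i ω) (Y j ω)) *
          (∑ i' ∈ range ms, ∑ j' ∈ range ns, φv (X i' ω) (Y j' ω)) =
          ∑ i ∈ range mk, ∑ i' ∈ range ms, ∑ j ∈ range nk, ∑ j' ∈ range ns,
            φu (X i ω) (Y j ω) * φv (X i' ω) (Y j' ω) := by
        rw [Finset.sum_mul_sum (range mk) (range ms)]
        exact Finset.sum_congr rfl fun i _ => Finset.sum_congr rfl fun i' _ =>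
          Finset.sum_mul_sum _ _ _ _
      rw [mul_mul_mul_comm, expand]
    rw [hfun, integral_const_mul]
    congr 1
    rw [integral_finset_sum _ (fun i _ => integrable_finset_sum _ fun i' _ =>
      integrable_finset_sum _ fun j _ => integrable_finset_sum _ fun j' _ => hintuv i j i' j')]
    have hstep : ∀ i ∈ range mk,
        ∫ ω, ∑ i' ∈ range ms, ∑ j ∈ range nk, ∑ j' ∈ range ns,
            φu (X i ω) (Y j ω) * φv (X i' ω) (Y j' ω) ∂μ =
        (nk : ℝ) * ((C + ((ns : ℝ) - 1) * A) + ((ms : ℝ) - 1) * (B + ((ns : ℝ) - 1) * (E * F))) := by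
      intro i hi
      rw [integral_finset_sum _ (fun i' _ => integrable_finset_sum _ fun j _ =>
        integrable_finset_sum _ fun j' _ => hintuv i j i' j')]
      have hinner : ∀ i' ∈ range ms,
          ∫ ω, ∑ j ∈ range nk, ∑ j' ∈ range ns,
              φu (X i ω) (Y j ω) * φv (X i' ω) (Y j' ω) ∂μ =
          if i = i' then (nk : ℝ) * (C + ((ns : ℝ) - 1) * A)
          else (nk : ℝ) * (B + ((ns : ℝ) - 1) * (E * F)) := by
        intro i' _
        rw [integral_finset_sum _ (fun j _ => integrable_finset_sum _ fun j' _ =>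
          hintuv i j i' j')]
        have hjsum : ∀ j ∈ range nk,
            ∫ ω, ∑ j' ∈ range ns, φu (X i ω) (Y j ω) * φv (X i' ω) (Y j' ω) ∂μ =
            if i = i' then C + ((ns : ℝ) - 1) * A else B + ((ns : ℝ) - 1) * (E * F) := by
          intro j hj
          rw [integral_finset_sum _ (fun j' _ => hintuv i j i' j')]
          have : ∀ j' ∈ range ns, ∫ ω, φu (X i ω) (Y j ω) * φv (X i' ω) (Y j' ω) ∂μ =
              if i = i' then (if j = j' then C else A) else (if j = j' then B else E * F) :=
            fun j' _ => hKval i i' j j'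
          rw [Finset.sum_congr rfl this]
          have hjns : j < ns := lt_of_lt_of_le (mem_range.mp hj) hnks
          by_cases hii : i = i'
          · simp only [if_pos hii]
            exact sum_ite_helper hjns C A
          · simp only [if_neg hii]
            exact sum_ite_helper hjns B (E * F)
        rw [Finset.sum_congr rfl hjsum]
        by_cases hii : i = i'
        · simp only [if_pos hii, Finset.sum_const, card_range, nsmul_eq_mul]
        · simp only [if_neg hii, Finset.sum_const, card_range, nsmul_eq_mul]
      rw [Finset.sum_congr rfl hinner]
      have hims : i < ms := lt_of_lt_of_le (mem_range.mp hi) hmks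
      rw [sum_ite_helper hims]
      ring
    rw [Finset.sum_congr rfl hstep, Finset.sum_const, card_range, nsmul_eq_mul]
  -- put everything together
  rw [hcov, hprod, hintUu, hintUv, hξ10, hξ01, hξ11, hcov, hcov, hcov]
  have e1 : ∫ ω, φu (X 0 ω) (Y 0 ω) * φv (X 0 ω) (Y 1 ω) ∂μ = A := rfl
  have e2 : ∫ ω, φu (X 0 ω) (Y 0 ω) * φv (X 1 ω) (Y 0 ω) ∂μ = B := rfl
  have e3 : ∫ ω, φu (X 0 ω) (Y 0 ω) * φv (X 0 ω) (Y 0 ω) ∂μ = C := rfl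
  rw [e1, e2, e3, hFv 0 1, hFv 1 0]
  rw [← hE, ← hF]
  field_simp
  ring
end
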